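/- Let the normal index range be a single value a = b = 1 (hypersurface case, l = 1), with b_{pq} := b^1_{pq} symmetric and c^p_q := c^p_{1q}. If R^p_{qst} = b_{qs}c^p_t − b_{qt}c^p_s vanishes for all p,q,s,t, then R^1_{1st} = c^p_s b_{pt} − c^p_t b_{ps} also vanishes for all s,t. -/
import Mathlib


/-- Theorem 6: for a normalized hypersurface (l = 1), if the induced affine connection is
flat then the normal connection is flat. -/
theorem stmt_7 {K : Type*} [Field K] {r : ℕ}
    (b : Fin r → Fin r → K) (c : Fin r → Fin r → K)
    (hb : ∀ p q, b p q = b q p)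
    (hflat : ∀ p q s t : Fin r, b q s * c p t - b q t * c p s = 0) :
    ∀ s t : Fin r, (∑ p, (c p s * b p t - c p t * b p s)) = 0 := by
  intro s t
  apply Finset.sum_eq_zero
  intro p _
  have h := hflat p p s t
  linear_combination -h
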